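/- Let f : ℝⁿ → ℝ and h : ℝⁿ → ℝ^m be continuously differentiable, let J(x) denote the m × n Jacobian matrix of h at x, and let K > 0. Let x : ℝ → ℝⁿ be a differentiable curve satisfying the FL-CMO closed-loop dynamics ẋ(t) = −∇f(x(t)) − J(x(t))ᵀ (J(x(t))J(x(t))ᵀ)⁻¹ (K h(x(t)) − J(x(t))∇f(x(t))) for all t ≥ 0, where J(x(t))J(x(t))ᵀ is invertible for all t ≥ 0. Then h(x(t)) = e^{−K t} h(x(0)) for all t ≥ 0; in particular h(x(t)) → 0 as t → ∞, so the constraint violation decays exponentially to zero along every trajectory. -/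

import Mathlib

/-- Along any trajectory of the FL-CMO closed-loop dynamics, the constraint violation
decays exponentially: h(x(t)) = e^{−K t} h(x(0)) for all t ≥ 0, and h(x(t)) → 0. -/
theorem stmt_6 {n m : ℕ}
    (f : EuclideanSpace ℝ (Fin n) → ℝ)
    (h : EuclideanSpace ℝ (Fin n) → EuclideanSpace ℝ (Fin m))
    (hf : ContDiff ℝ 1 f) (hh : ContDiff ℝ 1 h)
    (K : ℝ) (hK : 0 < K)
    (x : ℝ → EuclideanSpace ℝ (Fin n))
    (A : ℝ → (EuclideanSpace ℝ (Fin m) ≃L[ℝ] EuclideanSpace ℝ (Fin m)))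
    (hA : ∀ t : ℝ, 0 ≤ t →
      (A t : EuclideanSpace ℝ (Fin m) →L[ℝ] EuclideanSpace ℝ (Fin m)) =
        (fderiv ℝ h (x t)).comp (ContinuousLinearMap.adjoint (fderiv ℝ h (x t))))
    (hdyn : ∀ t : ℝ, 0 ≤ t → HasDerivAt x
      (-gradient f (x t) - (ContinuousLinearMap.adjoint (fderiv ℝ h (x t)))
        ((A t).symm (K • h (x t) - fderiv ℝ h (x t) (gradient f (x t))))) t) :
    (∀ t : ℝ, 0 ≤ t → h (x t) = Real.exp (-K * t) • h (x 0)) ∧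
    Filter.Tendsto (fun t => h (x t)) Filter.atTop (nhds 0) := by
  -- derivative of h ∘ x
  have hhd : ∀ t : ℝ, 0 ≤ t →
      HasDerivAt (fun s => h (x s)) (-(K • h (x t))) t := by
    intro t ht
    have hdh : HasFDerivAt h (fderiv ℝ h (x t)) (x t) :=
      (hh.differentiable one_ne_zero (x t)).hasFDerivAt
    have := hdh.comp_hasDerivAt t (hdyn t ht)
    refine this.congr_deriv (Eq.symm ?_)
    set J := fderiv ℝ h (x t)
    set u := K • h (x t) - J (gradient f (x t))
    have key : J ((ContinuousLinearMap.adjoint J) ((A t).symm u)) = u := by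
      have := congrArg (fun (L : EuclideanSpace ℝ (Fin m) →L[ℝ] EuclideanSpace ℝ (Fin m)) =>
        L ((A t).symm u)) (hA t ht)
      simpa using this.symm
    simp only [map_sub, map_neg, J.map_neg] at *
    rw [key]
    simp [u]
    abel
  -- the rescaled quantity is constant
  have hg : ∀ t : ℝ, 0 ≤ t →
      HasDerivAt (fun s => Real.exp (K * s) • h (x s)) 0 t := by
    intro t ht
    have he : HasDerivAt (fun s => Real.exp (K * s)) (K * Real.exp (K * t)) t := by
      have := (Real.hasDerivAt_exp (K * t)).comp t ((hasDerivAt_id t).const_mul K)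
      simpa [mul_comm, Function.comp_def] using this
    have := he.smul (hhd t ht)
    refine this.congr_deriv ?_
    simp [smul_smul, smul_sub, mul_comm, mul_left_comm]
  have hconst : ∀ t : ℝ, 0 ≤ t → Real.exp (K * t) • h (x t) = h (x 0) := by
    intro t ht
    have hcont : ContinuousOn (fun s => Real.exp (K * s) • h (x s)) (Set.Icc 0 t) :=
      fun s hs => ((hg s hs.1).continuousAt).continuousWithinAt
    have := constant_of_has_deriv_right_zero hcont
      (fun s hs => ((hg s hs.1).hasDerivWithinAt)) t (Set.right_mem_Icc.2 ht)
    simpa using this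
  have key : ∀ t : ℝ, 0 ≤ t → h (x t) = Real.exp (-K * t) • h (x 0) := by
    intro t ht
    rw [← hconst t ht, smul_smul, neg_mul, ← Real.exp_add]
    simp
  refine ⟨key, ?_⟩
  have h1 : Filter.Tendsto (fun t : ℝ => Real.exp (-K * t) • h (x 0))
      Filter.atTop (nhds 0) := by
    have : Filter.Tendsto (fun t : ℝ => Real.exp (-K * t)) Filter.atTop (nhds 0) := by
      apply Real.tendsto_exp_atBot.comp
      have : Filter.Tendsto (fun t : ℝ => K * t) Filter.atTop Filter.atTop :=
        Filter.Tendsto.const_mul_atTop hK Filter.tendsto_id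
      exact (Filter.tendsto_neg_atTop_atBot.comp this).congr (fun t => by simp [Function.comp, neg_mul])
    simpa using this.smul_const (h (x 0))
  refine h1.congr' ?_
  filter_upwards [Filter.eventually_ge_atTop (0:ℝ)] with t ht
  exact (key t ht).symm
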